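/- For every d ≥ 2, the element x ∈ ℂ[x,y] satisfies Xᵈ − sX^{d−1} + tX + t = 0 where s = x + y + xy and t = x^{d−1}y, and the element y satisfies Y(s − Y)^{d−1} − t(1 + Y)^{d−1} = 0; consequently ℂ[x,y] is integral over ℂ[x + y + xy, x^{d−1}y] and the map f_d(x,y) = (x + y + xy, x^{d−1}y) is a proper polynomial map of topological degree d. -/

import Mathlib

set_option synthInstance.maxHeartbeats 1000000
set_option maxHeartbeats 1000000
open MvPolynomial

/-- The map `f_d(x,y) = (x + y + xy, x^{d-1}y)`. -/
noncomputable def fd (d : ℕ) (p : ℂ × ℂ) : ℂ × ℂ :=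
  (p.1 + p.2 + p.1 * p.2, p.1 ^ (d - 1) * p.2)

/-- The Jacobian determinant of `f_d` as a function on `ℂ²`. -/
noncomputable def fdJac (d : ℕ) (p : ℂ × ℂ) : ℂ :=
  (1 + p.2) * p.1 ^ (d - 1) - ((d : ℂ) - 1) * (1 + p.1) * p.1 ^ (d - 2) * p.2

section aux

open Polynomial

lemma integral_all (d : ℕ) (hd : 2 ≤ d) (q : MvPolynomial (Fin 2) ℂ) :
    IsIntegral (Algebra.adjoin ℂ
      ({X 0 + X 1 + X 0 * X 1, X 0 ^ (d - 1) * X 1} : Set (MvPolynomial (Fin 2) ℂ))) q := by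
  set A := Algebra.adjoin ℂ ({X 0 + X 1 + X 0 * X 1, X 0 ^ (d - 1) * X 1} :
    Set (MvPolynomial (Fin 2) ℂ)) with hA
  have hsmem : (X 0 + X 1 + X 0 * X 1 : MvPolynomial (Fin 2) ℂ) ∈ A :=
    Algebra.subset_adjoin (by simp)
  have htmem : (X 0 ^ (d - 1) * X 1 : MvPolynomial (Fin 2) ℂ) ∈ A :=
    Algebra.subset_adjoin (by simp)
  set s' : A := ⟨_, hsmem⟩ with hs'
  set t' : A := ⟨_, htmem⟩ with ht'
  have hs : (s' : MvPolynomial (Fin 2) ℂ) = X 0 + X 1 + X 0 * X 1 := rfl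
  have ht : (t' : MvPolynomial (Fin 2) ℂ) = X 0 ^ (d-1) * X 1 := rfl
  have hmap : ∀ a : A, algebraMap A (MvPolynomial (Fin 2) ℂ) a = (a : MvPolynomial (Fin 2) ℂ) :=
    fun a => rfl
  have hd1 : ((d - 1 : ℕ) : WithBot ℕ) < ((d : ℕ) : WithBot ℕ) :=
    by exact_mod_cast (show d - 1 < d by omega)
  have hx0 : IsIntegral A (X 0 : MvPolynomial (Fin 2) ℂ) := by
    refine ⟨Polynomial.X ^ d + (Polynomial.C t' * Polynomial.X + Polynomial.C t'
        - Polynomial.C s' * Polynomial.X ^ (d - 1)), ?_, ?_⟩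
    · apply Polynomial.monic_X_pow_add
      have h1 : (Polynomial.C t' * Polynomial.X : Polynomial A).degree ≤ ((d - 1 : ℕ) : WithBot ℕ) :=
        le_trans (degree_C_mul_X_le _) (by exact_mod_cast (show (1:ℕ) ≤ d - 1 by omega))
      have h3 : (Polynomial.C t' : Polynomial A).degree ≤ ((d - 1 : ℕ) : WithBot ℕ) :=
        le_trans degree_C_le (by exact_mod_cast (show (0:ℕ) ≤ d - 1 by omega))
      refine lt_of_le_of_lt (le_trans (degree_sub_le _ _) (max_le
        (le_trans (degree_add_le _ _) (max_le h1 h3)) (degree_C_mul_X_pow_le _ _))) hd1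
    · simp only [Polynomial.aeval_def, Polynomial.eval₂_add, Polynomial.eval₂_sub,
        Polynomial.eval₂_mul, Polynomial.eval₂_pow, Polynomial.eval₂_one, Polynomial.eval₂_neg,
        Polynomial.eval₂_X, Polynomial.eval₂_C, hmap, hs, ht]
      obtain ⟨e, rfl⟩ : ∃ e, d = e + 1 := ⟨d - 1, by omega⟩
      simp only [Nat.add_sub_cancel]
      ring
  have hx1 : IsIntegral A (X 1 : MvPolynomial (Fin 2) ℂ) := by
    refine ⟨Polynomial.X * (Polynomial.X - Polynomial.C s') ^ (d - 1)
        - (-1)^(d-1) * Polynomial.C t' * (1 + Polynomial.X) ^ (d - 1), ?_, ?_⟩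
    · apply Polynomial.Monic.sub_of_left (Polynomial.monic_X.mul ((monic_X_sub_C s').pow _))
      have hdeg : (Polynomial.X * (Polynomial.X - Polynomial.C s') ^ (d - 1) : Polynomial A).degree
          = (d : ℕ) := by
        rw [degree_mul, degree_pow, degree_X, degree_X_sub_C]
        rw [show ((d:ℕ) : WithBot ℕ) = ((1 + (d-1)*1 : ℕ) : WithBot ℕ) by congr 1; omega]
        push_cast; ring
      rw [hdeg]
      have h1 : ((-1)^(d-1) * Polynomial.C t' : Polynomial A) = Polynomial.C ((-1)^(d-1) * t') := by
        simp
      calc ((-1)^(d-1) * Polynomial.C t' * (1 + Polynomial.X) ^ (d - 1) : Polynomial A).degree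
          ≤ _ + _ := degree_mul_le _ _
        _ ≤ 0 + ((d - 1 : ℕ) : WithBot ℕ) := by
            apply add_le_add
            · rw [h1]; exact degree_C_le
            · refine le_trans (degree_pow_le _ _) ?_
              simp only [nsmul_eq_mul]
              calc ((d-1 : ℕ) : WithBot ℕ) * (1 + Polynomial.X : Polynomial A).degree
                  ≤ ((d-1:ℕ) : WithBot ℕ) * 1 := by
                    apply mul_le_mul_of_nonneg_left
                    · rw [add_comm]; exact le_trans (degree_add_le _ _) (by simp)
                    · exact_mod_cast (show (0:ℕ) ≤ d - 1 by omega)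
                _ = ((d-1:ℕ) : WithBot ℕ) := mul_one _
        _ < (d : ℕ) := by rw [zero_add]; exact hd1
    · simp only [Polynomial.aeval_def, Polynomial.eval₂_add, Polynomial.eval₂_sub,
        Polynomial.eval₂_mul, Polynomial.eval₂_pow, Polynomial.eval₂_one, Polynomial.eval₂_neg,
        Polynomial.eval₂_X, Polynomial.eval₂_C, hmap, hs, ht]
      have key : (X 1 : MvPolynomial (Fin 2) ℂ) * ((X 0 + X 1 + X 0 * X 1) - X 1) ^ (d - 1)
          - (X 0 ^ (d - 1) * X 1) * (1 + X 1) ^ (d - 1) = 0 := by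
        have h : ((X 0 + X 1 + X 0 * X 1) - X 1 : MvPolynomial (Fin 2) ℂ) = X 0 * (1 + X 1) := by
          ring
        rw [h, mul_pow]; ring
      have h2 : ((X 1 : MvPolynomial (Fin 2) ℂ) - (X 0 + X 1 + X 0 * X 1)) ^ (d-1)
          = (-1)^(d-1) * ((X 0 + X 1 + X 0 * X 1) - (X 1: MvPolynomial (Fin 2) ℂ)) ^ (d-1) := by
        rw [show ((X 1 : MvPolynomial (Fin 2) ℂ) - (X 0 + X 1 + X 0 * X 1))
          = -((X 0 + X 1 + X 0 * X 1) - X 1) from by ring, neg_pow]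
      rw [h2]
      linear_combination ((-1:MvPolynomial (Fin 2) ℂ))^(d-1) * key
  clear hs ht hs' ht'
  induction q using MvPolynomial.induction_on with
  | C a =>
      exact isIntegral_algebraMap (x := (⟨MvPolynomial.C a, A.algebraMap_mem a⟩ : A))
  | add p r hp hr => exact hp.add hr
  | mul_X p n hp =>
      refine hp.mul ?_
      fin_cases n
      · exact hx0
      · exact hx1


lemma fd_proper (d : ℕ) (hd : 2 ≤ d) (K : Set (ℂ × ℂ)) (hK : IsCompact K) :
    IsCompact (fd d ⁻¹' K) := by
  obtain ⟨e, he⟩ : ∃ e, d - 1 = e + 1 := ⟨d - 2, by omega⟩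
  obtain ⟨r, hr⟩ := hK.isBounded.subset_closedBall 0
  set R : ℝ := max r 0 with hR
  have hR0 : 0 ≤ R := le_max_right _ _
  have hRK : ∀ w ∈ K, ‖w.1‖ ≤ R ∧ ‖w.2‖ ≤ R := by
    intro w hw
    have := hr hw
    rw [Metric.mem_closedBall, dist_zero_right] at this
    exact ⟨le_trans (norm_fst_le w) (le_trans this (le_max_left _ _)),
      le_trans (norm_snd_le w) (le_trans this (le_max_left _ _))⟩
  set C1 : ℝ := max 1 (3 * R) with hC1
  have hC10 : (1:ℝ) ≤ C1 := le_max_left _ _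
  set C2 : ℝ := max (2 * (R + C1) + 1) (2 ^ (d-1) * R) with hC2
  have hbound : ∀ p : ℂ × ℂ, p ∈ fd d ⁻¹' K → ‖p.1‖ ≤ C1 ∧ ‖p.2‖ ≤ C2 := by
    rintro ⟨x, y⟩ hp
    obtain ⟨hs, ht⟩ := hRK _ hp
    simp only [fd] at hs ht
    -- bound on x
    have hx : ‖x‖ ≤ C1 := by
      by_contra hc
      push_neg at hc
      have h1 : 1 < ‖x‖ := lt_of_le_of_lt hC10 hc
      have h3 : 3 * R < ‖x‖ := lt_of_le_of_lt (le_max_right 1 (3*R)) hc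
      have hid : x ^ (d - 1) * x = (x + y + x*y) * x ^ (d-1) - (x ^ (d-1) * y) * x
          - x ^ (d-1) * y := by rw [he]; ring
      have hn : ‖x‖ ^ (d-1) * ‖x‖ ≤ R * ‖x‖^(d-1) + R * ‖x‖ + R := by
        calc ‖x‖ ^ (d-1) * ‖x‖ = ‖x ^ (d-1) * x‖ := by rw [norm_mul, norm_pow]
          _ = ‖(x + y + x*y) * x ^ (d-1) - (x ^ (d-1) * y) * x - x ^ (d-1) * y‖ := by rw [hid]
          _ ≤ ‖(x + y + x*y) * x ^ (d-1)‖ + ‖(x ^ (d-1) * y) * x‖ + ‖x ^ (d-1) * y‖ := by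
              refine le_trans (norm_sub_le _ _) ?_
              gcongr
              exact norm_sub_le _ _
          _ ≤ R * ‖x‖^(d-1) + R * ‖x‖ + R := by
              rw [norm_mul, norm_mul, norm_pow]
              gcongr <;> simp_all
      have hxe1 : 1 ≤ ‖x‖ ^ (d-1) := one_le_pow₀ (le_of_lt h1)
      have hxe2 : ‖x‖ ≤ ‖x‖ ^ (d-1) := by
        rw [he]; exact le_self_pow₀ (le_of_lt h1) (by omega)
      nlinarith [hxe1, hxe2, hn, h1, h3, hR0]
    refine ⟨hx, ?_⟩
    -- bound on y
    by_contra hc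
    push_neg at hc
    have hy1 : 2 * (R + C1) + 1 < ‖y‖ := lt_of_le_of_lt (le_max_left _ _) hc
    have hy2 : 2 ^ (d-1) * R < ‖y‖ := lt_of_le_of_lt (le_max_right _ _) hc
    have hmul : ‖y‖ * ‖1 + x‖ ≤ R + C1 := by
      have : y * (1 + x) = (x + y + x*y) - x := by ring
      calc ‖y‖ * ‖1 + x‖ = ‖y * (1+x)‖ := (norm_mul _ _).symm
        _ = ‖(x + y + x*y) - x‖ := by rw [this]
        _ ≤ ‖x + y + x*y‖ + ‖x‖ := norm_sub_le _ _
        _ ≤ R + C1 := add_le_add hs hx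
    have hRC : 0 ≤ R + C1 := by linarith
    have hhalf : ‖1 + x‖ < 1/2 := by
      by_contra hh
      push_neg at hh
      nlinarith [hmul, hy1]
    have hxhalf : (1:ℝ)/2 < ‖x‖ := by
      have h1' : ‖(1 + x) - x‖ = 1 := by norm_num
      have h2' := norm_sub_le (1+x) x
      rw [h1'] at h2'
      linarith
    have hpow : (1/2 : ℝ) ^ (d-1) * ‖y‖ ≤ ‖x‖ ^ (d-1) * ‖y‖ := by
      exact mul_le_mul_of_nonneg_right
        (pow_le_pow_left₀ (by norm_num) (le_of_lt hxhalf) _) (norm_nonneg y)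
    have ht' : ‖x‖ ^ (d-1) * ‖y‖ ≤ R := by
      rw [← norm_pow, ← norm_mul]; exact ht
    have h2e : (0:ℝ) < (2:ℝ) ^ (d-1) := by positivity
    have hfin : ‖y‖ ≤ 2 ^ (d-1) * R := by
      have := le_trans hpow ht'
      have h' : ‖y‖ = 2 ^ (d-1) * ((1/2:ℝ) ^ (d-1) * ‖y‖) := by
        rw [← mul_assoc, ← mul_pow]
        norm_num
      rw [h']
      gcongr
    have hC2ge : 2 ^ (d-1) * R ≤ C2 := le_max_right _ _
    linarith
  refine IsCompact.of_isClosed_subset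
    ((isCompact_closedBall (0:ℂ) C1).prod (isCompact_closedBall (0:ℂ) C2))
    (hK.isClosed.preimage (by unfold fd; fun_prop)) ?_
  rintro p hp
  obtain ⟨h1, h2⟩ := hbound p hp
  constructor
  · simpa [Metric.mem_closedBall, dist_zero_right] using h1
  · simpa [Metric.mem_closedBall, dist_zero_right] using h2


lemma fiber_card (d : ℕ) (hd : 2 ≤ d) (w : ℂ × ℂ)
    (hw : w ∉ fd d '' {p | fdJac d p = 0}) :
    Nat.card {p : ℂ × ℂ // fd d p = w} = d := by
  obtain ⟨e, rfl⟩ : ∃ e, d = e + 2 := ⟨d - 2, by omega⟩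
  have h1 : e + 2 - 1 = e + 1 := rfl
  have h2 : e + 2 - 2 = e := by omega
  obtain ⟨s, t⟩ := w
  set P : ℂ[X] := Polynomial.X ^ (e+2) + (Polynomial.C t * Polynomial.X + Polynomial.C t
      - Polynomial.C s * Polynomial.X ^ (e+1)) with hP
  -- degree facts
  have hdeglt : (Polynomial.C t * Polynomial.X + Polynomial.C t
      - Polynomial.C s * Polynomial.X ^ (e+1) : ℂ[X]).degree < ((e+2 : ℕ) : WithBot ℕ) := by
    have ha : (Polynomial.C t * Polynomial.X : ℂ[X]).degree ≤ ((e+1 : ℕ) : WithBot ℕ) :=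
      le_trans (degree_C_mul_X_le _) (by exact_mod_cast (show (1:ℕ) ≤ e+1 by omega))
    have hb : (Polynomial.C t : ℂ[X]).degree ≤ ((e+1 : ℕ) : WithBot ℕ) :=
      le_trans degree_C_le (by exact_mod_cast (show (0:ℕ) ≤ e+1 by omega))
    refine lt_of_le_of_lt (le_trans (degree_sub_le _ _) (max_le
      (le_trans (degree_add_le _ _) (max_le ha hb)) (degree_C_mul_X_pow_le _ _)))
      (by exact_mod_cast (show e+1 < e+2 by omega))
  have hPm : P.Monic := monic_X_pow_add hdeglt
  have hPne : P ≠ 0 := hPm.ne_zero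
  have hPdeg : P.natDegree = e + 2 := by
    have : P.degree = ((e+2:ℕ) : WithBot ℕ) := by
      rw [hP, degree_add_eq_left_of_degree_lt (by rw [degree_X_pow]; exact hdeglt), degree_X_pow]
    exact natDegree_eq_of_degree_eq_some this
  have heval : ∀ z : ℂ, P.eval z = z^(e+2) + (t*z + t - s*z^(e+1)) := by
    intro z; simp [hP]
  have hderiv : ∀ z : ℂ, P.derivative.eval z
      = ((e:ℂ)+2)*z^(e+1) + (t - s*((e:ℂ)+1)*z^e) := by
    intro z
    rw [hP]
    simp only [derivative_add, derivative_sub, derivative_mul, derivative_C, derivative_X,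
      derivative_X_pow, derivative_C_mul]
    simp only [Nat.add_sub_cancel]
    simp only [Polynomial.eval_add, Polynomial.eval_sub, Polynomial.eval_mul, Polynomial.eval_pow,
      Polynomial.eval_X, Polynomial.eval_C, Polynomial.eval_natCast, Polynomial.eval_one,
      Polynomial.eval_zero, mul_zero, zero_mul, add_zero, zero_add, mul_one]
    push_cast
    ring
  -- the y-coordinate map
  set g : ℂ → ℂ × ℂ := fun z => (z, if z = -1 then (-1:ℂ)^(e+1)*t else (s - z)/(1+z)) with hg
  -- L1 : fiber → root
  have L1 : ∀ x y : ℂ, fd (e+2) (x, y) = (s, t) → P.eval x = 0 := by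
    intro x y hxy
    rw [Prod.ext_iff] at hxy
    simp only [fd, h1] at hxy
    obtain ⟨e1, e2⟩ := hxy
    rw [heval, ← e1, ← e2]
    ring
  -- L2 : root → fiber
  have L2 : ∀ z : ℂ, P.eval z = 0 → fd (e+2) (g z) = (s, t) := by
    intro z hz
    rw [heval] at hz
    by_cases hz1 : z = -1
    · subst hz1
      have hpe : ((-1:ℂ))^e ≠ 0 := pow_ne_zero _ (by norm_num)
      have hsm1 : s = -1 := by
        have hfac : ((-1:ℂ))^e * (1 + s) = 0 := by linear_combination hz
        rcases mul_eq_zero.mp hfac with h | h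
        · exact absurd h hpe
        · linear_combination h
      simp only [hg, if_pos rfl, fd, h1]
      rw [Prod.ext_iff]
      constructor
      · show (-1 : ℂ) + (-1:ℂ)^(e+1)*t + (-1) * ((-1:ℂ)^(e+1)*t) = s
        rw [hsm1]; ring
      · show (-1:ℂ)^(e+1) * ((-1:ℂ)^(e+1)*t) = t
        rw [← mul_assoc, ← mul_pow]
        norm_num
    · have h1z : (1 + z) ≠ 0 := by
        intro h; exact hz1 (by linear_combination h)
      simp only [hg, if_neg hz1, fd, h1]
      rw [Prod.ext_iff]
      constructor
      · show z + (s - z)/(1+z) + z * ((s - z)/(1+z)) = s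
        field_simp
        ring
      · show z^(e+1) * ((s - z)/(1+z)) = t
        field_simp
        linear_combination -hz
  -- L3 : uniqueness of fiber point given x
  have L3 : ∀ x y : ℂ, fd (e+2) (x, y) = (s, t) → (x, y) = g x := by
    intro x y hxy
    rw [Prod.ext_iff] at hxy
    simp only [fd, h1] at hxy
    obtain ⟨e1, e2⟩ := hxy
    rw [hg]
    by_cases hx1 : x = -1
    · subst hx1
      simp only [if_pos rfl, if_true, Prod.mk.injEq, true_and]
      rw [← e2, ← mul_assoc, ← mul_pow]
      norm_num
    · have h1x : (1 + x) ≠ 0 := by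
        intro h; exact hx1 (by linear_combination h)
      simp only [if_neg hx1, Prod.mk.injEq, true_and]
      rw [← e1]
      field_simp
      ring
  -- L4 : derivative equals Jacobian on the fiber
  have L4 : ∀ x y : ℂ, fd (e+2) (x, y) = (s, t) → P.derivative.eval x = fdJac (e+2) (x, y) := by
    intro x y hxy
    rw [Prod.ext_iff] at hxy
    simp only [fd, h1] at hxy
    obtain ⟨e1, e2⟩ := hxy
    rw [hderiv, fdJac]
    simp only [h1, h2]
    push_cast
    rw [← e1, ← e2]
    ring
  -- roots are simple
  have hnodup : P.roots.Nodup := by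
    rw [Multiset.nodup_iff_count_le_one]
    intro a
    rw [count_roots]
    by_contra hcnt
    push_neg at hcnt
    obtain ⟨hra, hda⟩ := (one_lt_rootMultiplicity_iff_isRoot hPne).mp hcnt
    have hfib : fd (e+2) (g a) = (s, t) := L2 a hra
    have hJ : fdJac (e+2) (g a) ≠ 0 := by
      intro h0
      exact hw ⟨g a, h0, hfib⟩
    have : P.derivative.eval a = fdJac (e+2) (g a) := by
      have := L4 a (g a).2 (by rw [show (a, (g a).2) = g a from rfl]; exact hfib)
      rwa [show (a, (g a).2) = g a from rfl] at this
    exact hJ (this ▸ hda)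
  -- the equivalence
  have hcardroots : Multiset.card P.roots = e + 2 := by
    rw [← hPdeg]
    exact splits_iff_card_roots.mp (IsAlgClosed.splits P)
  have hequiv : {p : ℂ × ℂ // fd (e+2) p = (s, t)} ≃ {z : ℂ // z ∈ P.roots.toFinset} := by
    refine ⟨fun p => ⟨p.1.1, ?_⟩, fun z => ⟨g z.1, L2 z.1 ?_⟩, ?_, ?_⟩
    · rw [Multiset.mem_toFinset, mem_roots hPne]
      exact L1 p.1.1 p.1.2 (by rw [Prod.mk.eta]; exact p.2)
    · have := z.2
      rwa [Multiset.mem_toFinset, mem_roots hPne] at this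
    · rintro ⟨p, hp⟩
      apply Subtype.ext
      exact (L3 p.1 p.2 (by rw [Prod.mk.eta]; exact hp)).symm
    · rintro ⟨z, hz⟩
      exact Subtype.ext rfl
  rw [Nat.card_congr hequiv, Nat.card_eq_finsetCard, Multiset.toFinset_card_of_nodup hnodup,
    hcardroots]


end aux

/-- For `d ≥ 2`, with `s = x + y + xy` and `t = x^{d-1}y`, the element `x` satisfies
`Xᵈ − sX^{d−1} + tX + t = 0` and `y` satisfies `Y(s−Y)^{d−1} − t(1+Y)^{d−1} = 0`;
consequently `ℂ[x,y]` is integral over `ℂ[s,t]`, and `f_d` is proper of topological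
degree `d` (every fiber over a point outside the branch locus has `d` points). -/
theorem stmt_5 (d : ℕ) (hd : 2 ≤ d) :
    (X 0 ^ d - (X 0 + X 1 + X 0 * X 1) * X 0 ^ (d - 1)
        + (X 0 ^ (d - 1) * X 1) * X 0 + X 0 ^ (d - 1) * X 1
      = (0 : MvPolynomial (Fin 2) ℂ)) ∧
    (X 1 * ((X 0 + X 1 + X 0 * X 1) - X 1) ^ (d - 1)
        - (X 0 ^ (d - 1) * X 1) * (1 + X 1) ^ (d - 1)
      = (0 : MvPolynomial (Fin 2) ℂ)) ∧
    (∀ q : MvPolynomial (Fin 2) ℂ,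
      IsIntegral (Algebra.adjoin ℂ
        ({X 0 + X 1 + X 0 * X 1, X 0 ^ (d - 1) * X 1} : Set (MvPolynomial (Fin 2) ℂ))) q) ∧
    (∀ K : Set (ℂ × ℂ), IsCompact K → IsCompact (fd d ⁻¹' K)) ∧
    (∀ w : ℂ × ℂ, w ∉ fd d '' {p | fdJac d p = 0} →
      Nat.card {p : ℂ × ℂ // fd d p = w} = d) := by
  refine ⟨?_, ?_, integral_all d hd, fd_proper d hd, fun w hw => fiber_card d hd w hw⟩
  · obtain ⟨e, rfl⟩ : ∃ e, d = e + 1 := ⟨d - 1, by omega⟩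
    simp only [Nat.add_sub_cancel]
    ring
  · have h : ((X 0 + X 1 + X 0 * X 1) - X 1 : MvPolynomial (Fin 2) ℂ) = X 0 * (1 + X 1) := by
      ring
    rw [h, mul_pow]
    ring
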